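/- arXiv:2408.06946 — 3 statements merged into one kernel-verified Lean document; each statement's English description precedes it below -/
import Mathlib

section
/- Let K ⊂ ℝ^{n+1} be a nonempty compact convex set and φ : ℝⁿ → ℝ a bounded function such that g(x) = h_K(x, −1) + φ(x) is convex on ℝⁿ. Then the Fenchel conjugate g* is a convex function with compact domain equal to dom⌊K⌋, and there exists a nonempty compact convex set L ⊂ ℝ^{n+1} with g(x) = h_L(x, −1) for all x ∈ ℝⁿ. -/
open scoped RealInnerProductSpace

/-- The Fenchel-Legendre transform of an extended-real-valued function. -/
noncomputable def conjE {n : ℕ} (f : EuclideanSpace ℝ (Fin n) → EReal)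
    (y : EuclideanSpace ℝ (Fin n)) : EReal :=
  ⨆ x, ((⟪y, x⟫ : ℝ) : EReal) - f x

/-- `y` belongs to the subgradient of `f` at `x`. -/
def InSubgrad {n : ℕ} (f : EuclideanSpace ℝ (Fin n) → EReal)
    (x y : EuclideanSpace ℝ (Fin n)) : Prop :=
  ∀ z, f x + ((⟪z - x, y⟫ : ℝ) : EReal) ≤ f z

/-- `f` is proper: not identically `⊤` and never `⊥`. -/
def ProperE {n : ℕ} (f : EuclideanSpace ℝ (Fin n) → EReal) : Prop :=
  (∃ x, f x ≠ ⊤) ∧ ∀ x, f x ≠ ⊥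

/-- Convexity for extended-real-valued functions. -/
def ConvexE {n : ℕ} (f : EuclideanSpace ℝ (Fin n) → EReal) : Prop :=
  ∀ x y : EuclideanSpace ℝ (Fin n), ∀ a b : ℝ, 0 ≤ a → 0 ≤ b → a + b = 1 →
    f (a • x + b • y) ≤ ((a : ℝ) : EReal) * f x + ((b : ℝ) : EReal) * f y


/-- `⌊K⌋(x) = inf {t : (x, t) ∈ K}` (with value `⊤` when no such `t` exists), as an
extended-real-valued function. -/
noncomputable def floorE {n : ℕ} (K : Set (EuclideanSpace ℝ (Fin n) × ℝ))
    (x : EuclideanSpace ℝ (Fin n)) : EReal :=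
  ⨅ t ∈ {t : ℝ | (x, t) ∈ K}, ((t : ℝ) : EReal)

lemma conjE_coe_le {n : ℕ} (h : EuclideanSpace ℝ (Fin n) → ℝ)
    (y x : EuclideanSpace ℝ (Fin n)) :
    ((⟪y, x⟫ - h x : ℝ) : EReal) ≤ conjE (fun x => ((h x : ℝ) : EReal)) y := by
  rw [conjE, EReal.coe_sub]
  exact le_iSup (fun x => ((⟪y, x⟫ : ℝ) : EReal) - ((h x : ℝ) : EReal)) x

lemma conjE_le_coe {n : ℕ} (h : EuclideanSpace ℝ (Fin n) → ℝ)
    (y : EuclideanSpace ℝ (Fin n)) (r : ℝ) (hb : ∀ x, ⟪y, x⟫ - h x ≤ r) :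
    conjE (fun x => ((h x : ℝ) : EReal)) y ≤ (r : EReal) := by
  rw [conjE]
  refine iSup_le fun x => ?_
  rw [← EReal.coe_sub]
  exact_mod_cast hb x

lemma conjE_convex {n : ℕ} (h : EuclideanSpace ℝ (Fin n) → ℝ) :
    ConvexE (conjE (fun x => ((h x : ℝ) : EReal))) := by
  intro x y a b ha hb hab
  rw [conjE]
  refine iSup_le fun z => ?_
  have hx' := conjE_coe_le h x z
  have hy' := conjE_coe_le h y z
  calc ((⟪a • x + b • y, z⟫ : ℝ) : EReal) - ((h z : ℝ) : EReal)
      = ((a * (⟪x, z⟫ - h z) + b * (⟪y, z⟫ - h z) : ℝ) : EReal) := by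
        rw [← EReal.coe_sub]
        norm_cast
        rw [inner_add_left, real_inner_smul_left, real_inner_smul_left]
        linear_combination (h z) * hab
    _ = ((a : ℝ) : EReal) * ((⟪x, z⟫ - h z : ℝ) : EReal)
        + ((b : ℝ) : EReal) * ((⟪y, z⟫ - h z : ℝ) : EReal) := by
        rw [EReal.coe_add, EReal.coe_mul, EReal.coe_mul]
    _ ≤ _ := add_le_add
        (mul_le_mul_of_nonneg_left hx' (by exact_mod_cast ha))
        (mul_le_mul_of_nonneg_left hy' (by exact_mod_cast hb))

lemma exists_subgrad {n : ℕ} (h : EuclideanSpace ℝ (Fin n) → ℝ)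
    (hc : ConvexOn ℝ Set.univ h) (x : EuclideanSpace ℝ (Fin n)) :
    ∃ y, ∀ z, ⟪y, z⟫ - h z ≤ ⟪y, x⟫ - h x := by
  have hcont : Continuous h := by
    rw [← continuousOn_univ]
    exact hc.continuousOn isOpen_univ
  set S : Set (EuclideanSpace ℝ (Fin n) × ℝ) := {p | h p.1 < p.2} with hSdef
  have hSopen : IsOpen S := isOpen_lt (hcont.comp continuous_fst) continuous_snd
  have hSconv : Convex ℝ S := by
    rintro p hp q hq a b ha hb hab
    simp only [hSdef, Set.mem_setOf_eq] at hp hq ⊢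
    have h1 : h (a • p.1 + b • q.1) ≤ a * h p.1 + b * h q.1 :=
      hc.2 (Set.mem_univ _) (Set.mem_univ _) ha hb hab
    have h2 : a * h p.1 + b * h q.1 < a * p.2 + b * q.2 := by
      rcases lt_or_eq_of_le ha with ha' | ha'
      · rcases lt_or_eq_of_le hb with hb' | hb'
        · exact add_lt_add (mul_lt_mul_of_pos_left hp ha') (mul_lt_mul_of_pos_left hq hb')
        · rw [← hb']; simp only [zero_mul, add_zero]
          exact mul_lt_mul_of_pos_left hp ha'
      · rw [← ha']; simp only [zero_mul, zero_add]
        have hb' : 0 < b := by linarith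
        exact mul_lt_mul_of_pos_left hq hb'
    exact lt_of_le_of_lt h1 h2
  have hxS : ((x, h x) : EuclideanSpace ℝ (Fin n) × ℝ) ∉ S := by simp [hSdef]
  obtain ⟨ℓ, hℓ⟩ := geometric_hahn_banach_open_point hSconv hSopen hxS
  set s : ℝ := ℓ (0, 1) with hsdef
  have decomp : ∀ (z : EuclideanSpace ℝ (Fin n)) (t : ℝ), ℓ (z, t) = ℓ (z, 0) + t * s := by
    intro z t
    have : ((z, t) : EuclideanSpace ℝ (Fin n) × ℝ) = (z, 0) + t • ((0 : EuclideanSpace ℝ (Fin n)), (1 : ℝ)) := by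
      simp [Prod.ext_iff]
    rw [this, map_add, map_smul, smul_eq_mul, hsdef]
  have hslt : s < 0 := by
    have h1 : ((x, h x + 1) : EuclideanSpace ℝ (Fin n) × ℝ) ∈ S := by simp [hSdef]
    have h2 := hℓ _ h1
    rw [decomp x (h x + 1), decomp x (h x)] at h2
    nlinarith
  have key : ∀ z, ℓ (z, 0) + h z * s ≤ ℓ (x, 0) + h x * s := by
    intro z
    have hz : ∀ ε : ℝ, 0 < ε → ℓ (z, 0) + (h z + ε) * s < ℓ (x, 0) + h x * s := by
      intro ε hε
      have hmem : ((z, h z + ε) : EuclideanSpace ℝ (Fin n) × ℝ) ∈ S := by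
        simp [hSdef, hε]
      have h2 := hℓ _ hmem
      rw [decomp z (h z + ε), decomp x (h x)] at h2
      exact h2
    by_contra hcon
    push_neg at hcon
    set d := ℓ (z, 0) + h z * s - (ℓ (x, 0) + h x * s) with hddef
    have hd : 0 < d := by simp only [hddef]; linarith
    have hns : 0 < -s := by linarith
    have := hz (d / (-s)) (div_pos hd hns)
    have he : (d / (-s)) * s = -d := by
      rw [div_mul_eq_mul_div, div_neg, mul_div_assoc, div_self hslt.ne, mul_one]
    nlinarith
  set c : ℝ := (-s)⁻¹ with hcdef
  have hcpos : 0 < c := inv_pos.2 (by linarith)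
  have hcs : c * s = -1 := by
    rw [hcdef]
    rw [inv_mul_eq_div, div_eq_iff (by linarith : (-s) ≠ 0)]
    ring
  set ψ : EuclideanSpace ℝ (Fin n) →L[ℝ] ℝ := ℓ.comp (ContinuousLinearMap.inl ℝ _ ℝ) with hψdef
  have hψ : ∀ z, ψ z = ℓ (z, 0) := fun z => rfl
  refine ⟨(InnerProductSpace.toDual ℝ _).symm (c • ψ), fun z => ?_⟩
  have hy : ∀ w, ⟪(InnerProductSpace.toDual ℝ _).symm (c • ψ), w⟫ = c * ψ w := by
    intro w
    rw [InnerProductSpace.toDual_symm_apply]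
    rfl
  rw [hy, hy, hψ, hψ]
  have h1 := key z
  have h2 : c * (ℓ (z, 0) + h z * s) ≤ c * (ℓ (x, 0) + h x * s) :=
    mul_le_mul_of_nonneg_left h1 hcpos.le
  have e3 : ∀ w : EuclideanSpace ℝ (Fin n), c * (ℓ (w, 0) + h w * s) = c * ℓ (w, 0) - h w := by
    intro w
    have : c * (h w * s) = h w * (c * s) := by ring
    rw [mul_add, this, hcs]; ring
  rw [e3 z, e3 x] at h2
  exact h2

/-- Bounded perturbations of restrictions of support functions: if
`g = h_K(·,−1) + φ` is convex with `φ` bounded, then `g*` is convex with compact domain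
`dom ⌊K⌋`, and `g` is again of the form `h_L(·,−1)`. -/
theorem bounded_perturbation_supportFunction {n : ℕ}
    (K : Set (EuclideanSpace ℝ (Fin n) × ℝ)) (hKne : K.Nonempty)
    (hKcomp : IsCompact K) (hKconv : Convex ℝ K)
    (φ : EuclideanSpace ℝ (Fin n) → ℝ) (hφ : ∃ C : ℝ, ∀ x, |φ x| ≤ C)
    (hg : ConvexOn ℝ Set.univ
      (fun x => sSup ((fun p : EuclideanSpace ℝ (Fin n) × ℝ =>
        (⟪p.1, x⟫ : ℝ) - p.2) '' K) + φ x)) :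
    let g : EuclideanSpace ℝ (Fin n) → ℝ := fun x =>
      sSup ((fun p : EuclideanSpace ℝ (Fin n) × ℝ => (⟪p.1, x⟫ : ℝ) - p.2) '' K) + φ x
    ConvexE (conjE (fun x => ((g x : ℝ) : EReal))) ∧
      {y | conjE (fun x => ((g x : ℝ) : EReal)) y ≠ ⊤} = {x | floorE K x ≠ ⊤} ∧
      IsCompact {y | conjE (fun x => ((g x : ℝ) : EReal)) y ≠ ⊤} ∧
      ∃ L : Set (EuclideanSpace ℝ (Fin n) × ℝ), L.Nonempty ∧ IsCompact L ∧ Convex ℝ L ∧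
        ∀ x, g x = sSup ((fun p : EuclideanSpace ℝ (Fin n) × ℝ =>
          (⟪p.1, x⟫ : ℝ) - p.2) '' L) := by
  intro g
  obtain ⟨C, hC⟩ := hφ
  have hgdef : ∀ x, g x = sSup ((fun p : EuclideanSpace ℝ (Fin n) × ℝ =>
      (⟪p.1, x⟫ : ℝ) - p.2) '' K) + φ x := fun x => rfl
  have hgconv : ConvexOn ℝ Set.univ g := hg
  have contmap : ∀ x : EuclideanSpace ℝ (Fin n),
      Continuous fun p : EuclideanSpace ℝ (Fin n) × ℝ => (⟪p.1, x⟫ : ℝ) - p.2 :=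
    fun x => (continuous_fst.inner continuous_const).sub continuous_snd
  have himg : ∀ x, ((fun p : EuclideanSpace ℝ (Fin n) × ℝ =>
      (⟪p.1, x⟫ : ℝ) - p.2) '' K).Nonempty := fun x => hKne.image _
  have hbdd : ∀ x, BddAbove ((fun p : EuclideanSpace ℝ (Fin n) × ℝ =>
      (⟪p.1, x⟫ : ℝ) - p.2) '' K) := fun x => (hKcomp.image (contmap x)).bddAbove
  set conj := conjE (fun x => ((g x : ℝ) : EReal)) with hconjdef
  have lb : ∀ y x, ((⟪y, x⟫ - g x : ℝ) : EReal) ≤ conj y := fun y x => conjE_coe_le g y x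
  have ub : ∀ y (r : ℝ), (∀ x, ⟪y, x⟫ - g x ≤ r) → conj y ≤ (r : EReal) :=
    fun y r h => conjE_le_coe g y r h
  set D : Set (EuclideanSpace ℝ (Fin n)) := Prod.fst '' K with hDdef
  have hDcomp : IsCompact D := hKcomp.image continuous_fst
  have hDconv : Convex ℝ D := by
    rintro _ ⟨p, hp, rfl⟩ _ ⟨q, hq, rfl⟩ a b ha hb hab
    exact ⟨a • p + b • q, hKconv hp hq ha hb hab, rfl⟩
  have bddsnd : BddAbove (Prod.snd '' K) := (hKcomp.image continuous_snd).bddAbove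
  have bddsndlow : BddBelow (Prod.snd '' K) := (hKcomp.image continuous_snd).bddBelow
  have domup : ∀ y t₀, (y, t₀) ∈ K → conj y ≤ ((t₀ + C : ℝ) : EReal) := by
    intro y t₀ hy
    apply ub
    intro x
    have h1 : (⟪y, x⟫ : ℝ) - t₀ ≤ sSup ((fun p : EuclideanSpace ℝ (Fin n) × ℝ =>
        (⟪p.1, x⟫ : ℝ) - p.2) '' K) := le_csSup (hbdd x) ⟨(y, t₀), hy, rfl⟩
    have h2 := (abs_le.1 (hC x)).1
    rw [hgdef x]
    linarith
  have notin_top : ∀ y, y ∉ D → conj y = ⊤ := by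
    intro y hy
    obtain ⟨ℓ, u, hu1, hu2⟩ := geometric_hahn_banach_closed_point hDconv hDcomp.isClosed hy
    set v := (InnerProductSpace.toDual ℝ (EuclideanSpace ℝ (Fin n))).symm ℓ with hvdef
    have hv : ∀ w, ⟪v, w⟫ = ℓ w := fun w => InnerProductSpace.toDual_symm_apply
    set m : ℝ := sInf (Prod.snd '' K) with hmdef
    have hm : ∀ p ∈ K, m ≤ Prod.snd p := fun p hp => csInf_le bddsndlow ⟨p, hp, rfl⟩
    set d : ℝ := ℓ y - u with hddef
    have hd : 0 < d := by simp only [hddef]; linarith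
    rw [EReal.eq_top_iff_forall_lt]
    intro r
    set sc : ℝ := max 0 ((r - m + C + 1) / d) with hscdef
    have hsc0 : 0 ≤ sc := le_max_left _ _
    have hscd : r - m + C + 1 ≤ sc * d := by
      have h1 : (r - m + C + 1) / d ≤ sc := le_max_right _ _
      calc r - m + C + 1 = ((r - m + C + 1) / d) * d := by field_simp
        _ ≤ sc * d := mul_le_mul_of_nonneg_right h1 hd.le
    have hsup : sSup ((fun p : EuclideanSpace ℝ (Fin n) × ℝ =>
        (⟪p.1, sc • v⟫ : ℝ) - p.2) '' K) ≤ sc * u - m := by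
      apply csSup_le (himg _)
      rintro _ ⟨p, hp, rfl⟩
      have h1 : (⟪p.1, v⟫ : ℝ) ≤ u := by
        rw [real_inner_comm, hv]
        exact (hu1 p.1 ⟨p, hp, rfl⟩).le
      have h2 : (⟪p.1, sc • v⟫ : ℝ) = sc * ⟪p.1, v⟫ := real_inner_smul_right p.1 v sc
      have h3 := hm p hp
      have h4 : sc * ⟪p.1, v⟫ ≤ sc * u := mul_le_mul_of_nonneg_left h1 hsc0
      show (⟪p.1, sc • v⟫ : ℝ) - p.2 ≤ sc * u - m
      linarith
    have hval : r < ⟪y, sc • v⟫ - g (sc • v) := by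
      have h1 : (⟪y, sc • v⟫ : ℝ) = sc * ℓ y := by
        rw [real_inner_smul_right, real_inner_comm, hv]
      have h2 : g (sc • v) ≤ sc * u - m + C := by
        rw [hgdef]
        have := (abs_le.1 (hC (sc • v))).2
        linarith
      have h3 : sc * ℓ y - sc * u = sc * d := by rw [hddef]; ring
      nlinarith
    calc ((r : ℝ) : EReal) < ((⟪y, sc • v⟫ - g (sc • v) : ℝ) : EReal) := by
          exact_mod_cast hval
      _ ≤ conj y := lb y (sc • v)
  have in_ne_top : ∀ y ∈ D, conj y ≠ ⊤ := by
    rintro _ ⟨p, hp, rfl⟩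
    have h1 : (p.1, p.2) ∈ K := by rwa [Prod.mk.eta]
    exact ((domup p.1 p.2 h1).trans_lt (EReal.coe_lt_top _)).ne
  have domeq : {y | conj y ≠ ⊤} = D := by
    ext y
    simp only [Set.mem_setOf_eq]
    exact ⟨fun h => by_contra fun h' => h (notin_top y h'), fun h => in_ne_top y h⟩
  have floordom : {x | floorE K x ≠ ⊤} = D := by
    ext x
    simp only [Set.mem_setOf_eq]
    constructor
    · intro h
      by_contra hx
      apply h
      have hemp : ∀ t : ℝ, (x, t) ∉ K := fun t ht => hx ⟨(x, t), ht, rfl⟩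
      simp [floorE, hemp]
    · rintro ⟨p, hp, rfl⟩ htop
      have h1 : (p.1, p.2) ∈ K := by rwa [Prod.mk.eta]
      have h2 : floorE K p.1 ≤ ((p.2 : ℝ) : EReal) := iInf₂_le p.2 h1
      rw [htop] at h2
      exact (EReal.coe_lt_top p.2).not_ge h2
  refine ⟨conjE_convex g, domeq.trans floordom.symm, domeq ▸ hDcomp, ?_⟩
  set M : ℝ := sSup (Prod.snd '' K) + C with hMdef
  set L : Set (EuclideanSpace ℝ (Fin n) × ℝ) :=
    {p | p.1 ∈ D ∧ conj p.1 ≤ ((p.2 : ℝ) : EReal) ∧ p.2 ≤ M} with hLdef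
  have hLne : L.Nonempty := by
    obtain ⟨p₀, hp₀⟩ := hKne
    refine ⟨(p₀.1, p₀.2 + C), ⟨p₀, hp₀, rfl⟩, ?_, ?_⟩
    · exact domup p₀.1 p₀.2 (by rwa [Prod.mk.eta])
    · have : p₀.2 ≤ sSup (Prod.snd '' K) := le_csSup bddsnd ⟨p₀, hp₀, rfl⟩
      simp only [hMdef]; linarith
  have hLclosed : IsClosed L := by
    have h1 : IsClosed {p : EuclideanSpace ℝ (Fin n) × ℝ | p.1 ∈ D} :=
      hDcomp.isClosed.preimage continuous_fst
    have h2 : IsClosed {p : EuclideanSpace ℝ (Fin n) × ℝ | conj p.1 ≤ ((p.2 : ℝ) : EReal)} := by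
      have heq : {p : EuclideanSpace ℝ (Fin n) × ℝ | conj p.1 ≤ ((p.2 : ℝ) : EReal)}
          = ⋂ x, {p : EuclideanSpace ℝ (Fin n) × ℝ | (⟪p.1, x⟫ : ℝ) - g x ≤ p.2} := by
        ext p
        simp only [Set.mem_setOf_eq, Set.mem_iInter]
        constructor
        · intro h x
          have := (lb p.1 x).trans h
          exact_mod_cast this
        · intro h
          exact ub p.1 p.2 h
      rw [heq]
      exact isClosed_iInter fun x => isClosed_le
        ((continuous_fst.inner continuous_const).sub continuous_const) continuous_snd
    have h3 : IsClosed {p : EuclideanSpace ℝ (Fin n) × ℝ | p.2 ≤ M} :=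
      isClosed_le continuous_snd continuous_const
    exact h1.inter (h2.inter h3)
  have hLcomp : IsCompact L := by
    refine IsCompact.of_isClosed_subset (hDcomp.prod (isCompact_Icc (a := -(g 0)) (b := M)))
      hLclosed ?_
    rintro p ⟨h1, h2, h3⟩
    refine ⟨h1, ?_, h3⟩
    have h4 := (lb p.1 0).trans h2
    have h5 : (⟪p.1, (0 : EuclideanSpace ℝ (Fin n))⟫ : ℝ) = 0 := inner_zero_right p.1
    have h6 : (⟪p.1, (0 : EuclideanSpace ℝ (Fin n))⟫ : ℝ) - g 0 ≤ p.2 := by exact_mod_cast h4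
    rw [h5] at h6
    linarith
  have hLconv : Convex ℝ L := by
    rintro p ⟨hp1, hp2, hp3⟩ q ⟨hq1, hq2, hq3⟩ a b ha hb hab
    refine ⟨hDconv hp1 hq1 ha hb hab, ?_, ?_⟩
    · have h1 := conjE_convex g p.1 q.1 a b ha hb hab
      have h2 : ((a : ℝ) : EReal) * conj p.1 + ((b : ℝ) : EReal) * conj q.1
          ≤ ((a : ℝ) : EReal) * ((p.2 : ℝ) : EReal) + ((b : ℝ) : EReal) * ((q.2 : ℝ) : EReal) :=
        add_le_add (mul_le_mul_of_nonneg_left hp2 (by exact_mod_cast ha))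
          (mul_le_mul_of_nonneg_left hq2 (by exact_mod_cast hb))
      have h3 : ((a : ℝ) : EReal) * ((p.2 : ℝ) : EReal) + ((b : ℝ) : EReal) * ((q.2 : ℝ) : EReal)
          = ((a * p.2 + b * q.2 : ℝ) : EReal) := by
        rw [EReal.coe_add, EReal.coe_mul, EReal.coe_mul]
      have h4 : ((a • p + b • q : EuclideanSpace ℝ (Fin n) × ℝ)).2 = a * p.2 + b * q.2 := rfl
      calc conj ((a • p + b • q).1) ≤ _ := h1
        _ ≤ ((a * p.2 + b * q.2 : ℝ) : EReal) := h3 ▸ h2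
        _ = (((a • p + b • q).2 : ℝ) : EReal) := by rw [h4]
    · have h4 : ((a • p + b • q : EuclideanSpace ℝ (Fin n) × ℝ)).2 = a * p.2 + b * q.2 := rfl
      rw [h4]
      have hMM : a * M + b * M = M := by linear_combination M * hab
      have hh1 : a * p.2 ≤ a * M := mul_le_mul_of_nonneg_left hp3 ha
      have hh2 : b * q.2 ≤ b * M := mul_le_mul_of_nonneg_left hq3 hb
      linarith
  refine ⟨L, hLne, hLcomp, hLconv, fun x => ?_⟩
  obtain ⟨y, hy⟩ := exists_subgrad g hgconv x
  set t : ℝ := ⟪y, x⟫ - g x with htdef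
  have hconjy_le : conj y ≤ ((t : ℝ) : EReal) := ub y t hy
  have hyD : y ∈ D := by
    by_contra hcon
    rw [notin_top y hcon] at hconjy_le
    exact (EReal.coe_lt_top t).not_ge hconjy_le
  have htM : t ≤ M := by
    obtain ⟨p, hp, hpy⟩ := hyD
    have h1 : ((t : ℝ) : EReal) ≤ conj y := lb y x
    have h2 : (y, p.2) ∈ K := by rw [← hpy]; rwa [Prod.mk.eta]
    have h3 := (h1.trans (domup y p.2 h2))
    have h4 : t ≤ p.2 + C := by exact_mod_cast h3
    have h5 : p.2 ≤ sSup (Prod.snd '' K) := le_csSup bddsnd ⟨p, hp, rfl⟩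
    simp only [hMdef]; linarith
  have hmemL : ((y, t) : EuclideanSpace ℝ (Fin n) × ℝ) ∈ L := ⟨hyD, hconjy_le, htM⟩
  have hub : ∀ v ∈ (fun p : EuclideanSpace ℝ (Fin n) × ℝ => (⟪p.1, x⟫ : ℝ) - p.2) '' L,
      v ≤ g x := by
    rintro _ ⟨p, ⟨hp1, hp2, hp3⟩, rfl⟩
    have h1 := (lb p.1 x).trans hp2
    have h2 : (⟪p.1, x⟫ : ℝ) - g x ≤ p.2 := by exact_mod_cast h1
    show (⟪p.1, x⟫ : ℝ) - p.2 ≤ g x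
    linarith
  refine le_antisymm ?_ (csSup_le ⟨_, ⟨(y, t), hmemL, rfl⟩⟩ hub)
  have hgx : g x = (⟪y, x⟫ : ℝ) - t := by rw [htdef]; ring
  rw [hgx]
  exact le_csSup ⟨g x, hub⟩ ⟨(y, t), hmemL, rfl⟩
end

section
/- Let f : ℝⁿ → ℝ ∪ {∞} be a proper lower semicontinuous convex function whose domain has nonempty interior, and let (f_j) be a sequence of proper lower semicontinuous convex functions. If (f_j) converges pointwise to f on a dense subset of ℝⁿ, then (f_j) converges uniformly to f on every compact subset of ℝⁿ that contains no boundary point of dom f. -/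
open scoped RealInnerProductSpace

open Filter

/-- A fixed homeomorphic embedding of `EReal` into `[-1, 1] ⊂ ℝ`, used to express uniform
convergence of extended-real-valued functions. -/
noncomputable def embE (a : EReal) : ℝ :=
  if a = ⊤ then 1 else if a = ⊥ then -1 else Real.tanh a.toReal

open Metric Set

section Helpers

lemma tanh_hasDerivAt (x : ℝ) : HasDerivAt Real.tanh (1/Real.cosh x^2) x := by
  have h3 : Real.cosh x ≠ 0 := (Real.cosh_pos x).ne'
  have h := (Real.hasDerivAt_sinh x).div (Real.hasDerivAt_cosh x) h3
  have heq : (fun y => Real.sinh y / Real.cosh y) = Real.tanh := by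
    funext y; rw [Real.tanh_eq_sinh_div_cosh]
  rw [show Real.sinh / Real.cosh = Real.tanh from heq] at h
  refine h.congr_deriv ?_
  have h2 := Real.cosh_sq_sub_sinh_sq x
  congr 1
  nlinarith [Real.cosh_sq_sub_sinh_sq x]

lemma tanh_lipschitz : LipschitzWith 1 Real.tanh := by
  apply lipschitzWith_of_nnnorm_deriv_le (fun x => (tanh_hasDerivAt x).differentiableAt)
  intro x
  have hd := (tanh_hasDerivAt x).deriv
  rw [← NNReal.coe_le_coe, coe_nnnorm, hd]
  have h1 : (1:ℝ) ≤ Real.cosh x ^ 2 := by nlinarith [Real.one_le_cosh x]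
  rw [Real.norm_eq_abs, abs_of_nonneg (by positivity), NNReal.coe_one]
  rw [div_le_one (by positivity)]
  exact h1

lemma tanh_dist (a b : ℝ) : |Real.tanh a - Real.tanh b| ≤ |a - b| := by
  have := tanh_lipschitz.dist_le_mul a b
  simpa [Real.dist_eq] using this

lemma tanh_le_one (x : ℝ) : Real.tanh x ≤ 1 := by
  rw [Real.tanh_eq_sinh_div_cosh, div_le_one (Real.cosh_pos x)]
  exact (Real.sinh_lt_cosh x).le

lemma one_sub_tanh_le (x : ℝ) : 1 - Real.tanh x ≤ 2 * Real.exp (-(2*x)) := by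
  rw [Real.tanh_eq_sinh_div_cosh, Real.sinh_eq, Real.cosh_eq]
  have hu : 0 < Real.exp x := Real.exp_pos x
  have hv : 0 < Real.exp (-x) := Real.exp_pos (-x)
  have huv : Real.exp x * Real.exp (-x) = 1 := by
    rw [← Real.exp_add]; simp
  have h2 : Real.exp (-(2*x)) = Real.exp (-x) * Real.exp (-x) := by
    rw [← Real.exp_add]; ring_nf
  have h3 : (Real.exp x - Real.exp (-x)) / 2 / ((Real.exp x + Real.exp (-x)) / 2)
      = (Real.exp x - Real.exp (-x)) / (Real.exp x + Real.exp (-x)) := by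
    have hne : Real.exp x + Real.exp (-x) ≠ 0 := by positivity
    field_simp
  rw [h2, h3, sub_le_iff_le_add, ← sub_le_iff_le_add', le_div_iff₀ (by positivity)]
  nlinarith

lemma exists_tanh_near (ε : ℝ) (hε : 0 < ε) : ∃ A : ℝ, ∀ t : ℝ, A ≤ t → |Real.tanh t - 1| < ε := by
  obtain ⟨A, hA⟩ : ∃ A : ℝ, 2 * Real.exp (-(2*A)) < ε := by
    have h := Real.tendsto_exp_atBot
    have h2 : Filter.Tendsto (fun A : ℝ => 2 * Real.exp (-(2*A))) Filter.atTop (nhds 0) := by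
      have : Filter.Tendsto (fun A : ℝ => -(2*A)) Filter.atTop Filter.atBot := by
        apply Filter.tendsto_neg_atBot_iff.mpr
        exact Filter.Tendsto.const_mul_atTop (by norm_num) Filter.tendsto_id
      simpa using ((h.comp this).const_mul (2:ℝ))
    exact ((h2.eventually_lt_const hε).and (Filter.eventually_ge_atTop 0)).exists.imp
      (fun A hA => hA.1)
  refine ⟨A, fun t ht => ?_⟩
  have h1 : 1 - Real.tanh t ≤ 2 * Real.exp (-(2*t)) := one_sub_tanh_le t
  have h2 : Real.exp (-(2*t)) ≤ Real.exp (-(2*A)) := Real.exp_le_exp.2 (by linarith)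
  rw [abs_sub_comm, abs_of_nonneg (by linarith [tanh_le_one t])]
  linarith



lemma embE_top : embE ⊤ = 1 := by simp [embE]

lemma embE_coe (t : ℝ) : embE (t : EReal) = Real.tanh t := by
  simp [embE, EReal.coe_ne_top, EReal.coe_ne_bot]

lemma ereal_exists_real {a : EReal} (hb : a ≠ ⊥) {M : ℝ} (h : a ≤ (M:EReal)) :
    ∃ t : ℝ, a = (t:EReal) ∧ t ≤ M := by
  induction a with
  | bot => exact absurd rfl hb
  | coe t => exact ⟨t, rfl, by exact_mod_cast h⟩
  | top => exact absurd h (by simp)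

lemma ereal_tendsto_real {g : ℕ → EReal} {c : ℝ} (hg : Tendsto g atTop (nhds (c:EReal)))
    {ε : ℝ} (hε : 0 < ε) :
    ∀ᶠ j in atTop, ∃ t : ℝ, g j = (t:EReal) ∧ |t - c| < ε := by
  have h1 : ∀ᶠ j in atTop, g j < ((c+ε :ℝ):EReal) :=
    hg.eventually_lt_const (by exact_mod_cast (by linarith : c < c+ε))
  have h2 : ∀ᶠ j in atTop, ((c-ε:ℝ):EReal) < g j :=
    hg.eventually_const_lt (by exact_mod_cast (by linarith : c - ε < c))
  filter_upwards [h1, h2] with j hj1 hj2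
  obtain ⟨t, ht, -⟩ := ereal_exists_real (ne_bot_of_gt hj2) hj1.le
  rw [ht] at hj1 hj2
  have e1 : t < c + ε := by exact_mod_cast hj1
  have e2 : c - ε < t := by exact_mod_cast hj2
  exact ⟨t, ht, abs_lt.2 ⟨by linarith, by linarith⟩⟩



lemma convexE_combo {n : ℕ} {g : EuclideanSpace ℝ (Fin n) → EReal} (hg : ConvexE g)
    {u v : EuclideanSpace ℝ (Fin n)} {a b p q : ℝ} (ha : 0 ≤ a) (hb : 0 ≤ b) (hab : a + b = 1)
    (hu : g u ≤ (p:EReal)) (hv : g v ≤ (q:EReal)) :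
    g (a • u + b • v) ≤ ((a*p + b*q : ℝ) : EReal) := by
  refine (hg u v a b ha hb hab).trans ?_
  push_cast
  exact add_le_add (mul_le_mul_of_nonneg_left hu (by exact_mod_cast ha))
    (mul_le_mul_of_nonneg_left hv (by exact_mod_cast hb))

lemma sublevel_convex {n : ℕ} {g : EuclideanSpace ℝ (Fin n) → EReal} (hg : ConvexE g) (M : ℝ) :
    Convex ℝ {y | g y ≤ (M:EReal)} := by
  intro u hu v hv a b ha hb hab
  refine (convexE_combo hg ha hb hab hu hv).trans ?_
  have : a * M + b * M = M := by rw [← add_mul, hab, one_mul]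
  rw [this]

lemma dense_net {n : ℕ} {D K : Set (EuclideanSpace ℝ (Fin n))} (hD : Dense D) (hK : IsCompact K)
    {δ : ℝ} (hδ : 0 < δ) :
    ∃ T : Finset (EuclideanSpace ℝ (Fin n)), (∀ d ∈ T, d ∈ D ∧ ∃ y ∈ K, dist y d < δ) ∧
      ∀ y ∈ K, ∃ d ∈ T, dist y d < δ := by
  have hchoice : ∀ c : EuclideanSpace ℝ (Fin n), ∃ p, p ∈ D ∧ dist c p < δ/2 := by
    intro c
    obtain ⟨p, hp1, hp2⟩ := Metric.dense_iff.1 hD c (δ/2) (by linarith)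
    exact ⟨p, hp2, by rw [dist_comm]; exact mem_ball.1 hp1⟩
  choose dd hdd1 hdd2 using hchoice
  obtain ⟨t, ht⟩ := hK.elim_finite_subcover (fun c : ↥K => Metric.ball (c:EuclideanSpace ℝ (Fin n)) (δ/2))
    (fun c => isOpen_ball) (fun y hy => Set.mem_iUnion.2 ⟨⟨y, hy⟩, mem_ball_self (by linarith)⟩)
  classical
  refine ⟨t.image (fun c : ↥K => dd (c : EuclideanSpace ℝ (Fin n))), ?_, ?_⟩
  · intro d hd
    obtain ⟨c, hct, rfl⟩ := Finset.mem_image.1 hd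
    exact ⟨hdd1 _, ⟨c, c.2, (hdd2 _).trans (by linarith)⟩⟩
  · intro y hy
    have := ht hy
    rw [Set.mem_iUnion] at this
    obtain ⟨⟨c, hc⟩, hyc⟩ := this
    simp only [Set.mem_iUnion] at hyc
    obtain ⟨hct, hyball⟩ := hyc
    refine ⟨dd c, Finset.mem_image.2 ⟨⟨c, hc⟩, hct, rfl⟩, ?_⟩
    calc dist y (dd c) ≤ dist y c + dist c (dd c) := dist_triangle _ _ _
    _ < δ/2 + δ/2 := add_lt_add (mem_ball.1 hyball) (hdd2 c)
    _ = δ := by ring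


lemma euclid_sum_single {n : ℕ} (v : EuclideanSpace ℝ (Fin n)) :
    ∑ i, v i • (EuclideanSpace.single i (1:ℝ)) = v := by
  ext j
  rw [WithLp.ofLp_sum, Finset.sum_apply]
  simp [EuclideanSpace.single_apply]

lemma abs_coord_le_norm {n : ℕ} (v : EuclideanSpace ℝ (Fin n)) (i : Fin n) : |v i| ≤ ‖v‖ := by
  rw [EuclideanSpace.norm_eq, ← Real.sqrt_sq_eq_abs]
  apply Real.sqrt_le_sqrt
  simp only [Real.norm_eq_abs, sq_abs]
  exact Finset.single_le_sum (f := fun j => v j ^ 2) (fun j _ => sq_nonneg _) (Finset.mem_univ i)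

lemma ball_subset_hull_cross {n : ℕ} (hn : 0 < n) (x : EuclideanSpace ℝ (Fin n)) {ρ : ℝ}
    (hρ : 0 < ρ) :
    Metric.ball x (ρ / (n+1)) ⊆
      convexHull ℝ (Set.range fun p : Fin n × Bool =>
        x + ((if p.2 then ρ else -ρ) • EuclideanSpace.single p.1 (1:ℝ))) := by
  intro y hy
  have hyx : ‖y - x‖ < ρ / (n+1) := by rwa [mem_ball_iff_norm] at hy
  have hρ' : ρ ≠ 0 := hρ.ne'
  have hn' : (n:ℝ) ≠ 0 := Nat.cast_ne_zero.2 hn.ne'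
  set s : ℝ := 1 - (∑ i, |(y - x) i|) / ρ with hs
  have hvb : ∀ i, |(y - x) i| ≤ ‖y - x‖ := fun i => abs_coord_le_norm (y - x) i
  have hsum : (∑ i, |(y - x) i|) < ρ := by
    calc (∑ i, |(y - x) i|) ≤ ∑ _i : Fin n, ‖y - x‖ := Finset.sum_le_sum (fun i _ => hvb i)
    _ = n * ‖y - x‖ := by simp [Finset.sum_const, Finset.card_univ]
    _ < ρ := by
        have h1 : (n : ℝ) * ‖y - x‖ ≤ n * (ρ / (n+1)) :=
          mul_le_mul_of_nonneg_left hyx.le (by positivity)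
        have h2 : (n:ℝ) * (ρ / (n+1)) < ρ := by
          rw [mul_div_assoc', div_lt_iff₀ (by positivity)]
          nlinarith [hρ]
        linarith
  have hspos : 0 < s := by rw [hs, sub_pos, div_lt_one hρ]; exact hsum
  set w : Fin n × Bool → ℝ := fun p =>
    (if p.2 then max ((y - x) p.1) 0 else max (-((y - x) p.1)) 0)/ρ + s/(2*n) with hw
  have e1 : ∀ i, w (i, true) = max ((y - x) i) 0 / ρ + s/(2*n) := fun i => by simp [hw]
  have e2 : ∀ i, w (i, false) = max (-((y - x) i)) 0 / ρ + s/(2*n) := fun i => by simp [hw]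
  have hwnn : ∀ p, 0 ≤ w p := by
    intro p; rw [hw]
    have : (0:ℝ) ≤ (if p.2 then max ((y - x) p.1) 0 else max (-((y - x) p.1)) 0) := by
      split <;> exact le_max_right _ _
    positivity
  have habs : ∀ a : ℝ, max a 0 + max (-a) 0 = |a| := fun a => by
    rcases le_or_gt 0 a with h | h
    · rw [max_eq_left h, max_eq_right (by linarith), abs_of_nonneg h]; ring
    · rw [max_eq_right h.le, max_eq_left (by linarith), abs_of_neg h]; ring
  have hself : ∀ a : ℝ, max a 0 - max (-a) 0 = a := fun a => by
    rcases le_or_gt 0 a with h | h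
    · rw [max_eq_left h, max_eq_right (by linarith)]; ring
    · rw [max_eq_right h.le, max_eq_left (by linarith)]; ring
  have hw1 : ∑ p, w p = 1 := by
    rw [Fintype.sum_prod_type]
    have hb : ∀ i : Fin n, ∑ b, w (i, b) = |(y - x) i|/ρ + s/n := by
      intro i
      rw [Fintype.sum_bool, e1, e2, ← habs ((y - x) i)]
      field_simp
      ring
    rw [Finset.sum_congr rfl (fun i _ => hb i), Finset.sum_add_distrib, ← Finset.sum_div,
      Finset.sum_const, Finset.card_univ]
    simp only [Fintype.card_fin, nsmul_eq_mul]
    rw [hs]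
    field_simp
    ring
  have key : ∑ p, w p • (x + ((if p.2 then ρ else -ρ) • EuclideanSpace.single p.1 (1:ℝ))) = y := by
    simp only [smul_add]
    rw [Finset.sum_add_distrib, ← Finset.sum_smul, hw1, one_smul]
    have h2 : ∀ p : Fin n × Bool,
        w p • ((if p.2 then ρ else -ρ) • EuclideanSpace.single p.1 (1:ℝ))
        = (w p * (if p.2 then ρ else -ρ)) • EuclideanSpace.single p.1 (1:ℝ) := by
      intro p; rw [smul_smul]
    rw [Finset.sum_congr rfl (fun p _ => h2 p), Fintype.sum_prod_type]
    have h3 : ∀ i : Fin n,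
        ∑ b, (w (i, b) * (if b then ρ else -ρ)) • EuclideanSpace.single i (1:ℝ)
        = (y - x) i • EuclideanSpace.single i (1:ℝ) := by
      intro i
      rw [Fintype.sum_bool, ← add_smul]
      congr 1
      rw [e1, e2]
      simp only [Bool.false_eq_true, if_false, if_true]
      have expand : (max ((y - x) i) 0 / ρ + s / (2 * ↑n)) * ρ
          + (max (-((y - x) i)) 0 / ρ + s / (2 * ↑n)) * -ρ
          = max ((y - x) i) 0 - max (-((y - x) i)) 0 := by
        field_simp
        ring
      rw [expand, hself]
    rw [Finset.sum_congr rfl (fun i _ => h3 i), euclid_sum_single (y - x)]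
    abel
  rw [← key]
  have := Finset.centerMass_mem_convexHull (Finset.univ (α := Fin n × Bool))
    (fun p _ => hwnn p) (by rw [hw1]; norm_num)
    (z := fun p => x + ((if p.2 then ρ else -ρ) • EuclideanSpace.single p.1 (1:ℝ)))
    (fun p _ => Set.mem_range_self p)
  rwa [Finset.centerMass_eq_of_sum_1 _ _ hw1] at this


lemma hull_perturb {n : ℕ} {ι : Type*} [Fintype ι] [Nonempty ι]
    {x : EuclideanSpace ℝ (Fin n)} {ε : ℝ} (hε : 0 < ε)
    (v d : ι → EuclideanSpace ℝ (Fin n))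
    (hv : Metric.ball x (2*ε) ⊆ convexHull ℝ (Set.range v))
    (hd : ∀ i, dist (d i) (v i) < ε) :
    Metric.ball x ε ⊆ convexHull ℝ (Set.range d) := by
  intro y hy
  by_contra hyK
  have hKcl : IsClosed (convexHull ℝ (Set.range d)) :=
    ((Set.finite_range d).isCompact_convexHull ℝ).isClosed
  obtain ⟨φ, u, hu1, hu2⟩ :=
    geometric_hahn_banach_closed_point (convex_convexHull ℝ _) hKcl hyK
  have hφd : ∀ i, φ (d i) < u := fun i =>
    hu1 _ (subset_convexHull ℝ _ (Set.mem_range_self i))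
  have hφne : ‖φ‖ ≠ 0 := by
    intro h0
    have : φ = 0 := by rwa [norm_eq_zero] at h0
    rw [this] at hu2 hφd
    exact absurd hu2 (not_lt.2 ((hφd (Classical.arbitrary ι)).le.trans (le_of_eq rfl)))
  have hφpos : 0 < ‖φ‖ := lt_of_le_of_ne (norm_nonneg φ) (Ne.symm hφne)
  -- norming vector via Riesz representation
  set wv := (InnerProductSpace.toDual ℝ (EuclideanSpace ℝ (Fin n))).symm φ with hwv
  have hwnorm : ‖wv‖ = ‖φ‖ := by
    rw [hwv]; exact (InnerProductSpace.toDual ℝ _).symm.norm_map φ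
  have hwrep : ∀ z, φ z = (inner ℝ wv z : ℝ) := by
    intro z
    have := (InnerProductSpace.toDual ℝ (EuclideanSpace ℝ (Fin n))).apply_symm_apply φ
    conv_lhs => rw [← this]
    rw [InnerProductSpace.toDual_apply_apply]
  set g : EuclideanSpace ℝ (Fin n) := ‖wv‖⁻¹ • wv with hg
  have hφg : φ g = ‖φ‖ := by
    rw [hwrep, hg, inner_smul_right, real_inner_self_eq_norm_sq, hwnorm]
    field_simp
  have hgnorm : ‖g‖ = 1 := by
    rw [hg, norm_smul, norm_inv, norm_norm, hwnorm]
    field_simp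
  -- the shifted point
  set y' := y + ε • g with hy'
  have hy'mem : y' ∈ Metric.ball x (2*ε) := by
    rw [mem_ball_iff_norm] at hy ⊢
    have : y' - x = (y - x) + ε • g := by rw [hy']; abel
    rw [this]
    calc ‖(y - x) + ε • g‖ ≤ ‖y - x‖ + ‖ε • g‖ := norm_add_le _ _
    _ = ‖y - x‖ + ε := by rw [norm_smul, hgnorm, Real.norm_eq_abs, abs_of_pos hε, mul_one]
    _ < 2*ε := by linarith
  have hy'hull := hv hy'mem
  -- bound φ on hull of v
  set S := Finset.univ.sup' (Finset.univ_nonempty) (fun i => φ (v i)) with hS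
  have hhalf : convexHull ℝ (Set.range v) ⊆ {z | φ z ≤ S} := by
    apply convexHull_min
    · rintro _ ⟨i, rfl⟩
      exact Finset.le_sup' (fun i => φ (v i)) (Finset.mem_univ i)
    · exact convex_halfSpace_le (IsLinearMap.mk φ.map_add φ.map_smul) S
  have hSlt : S < u + ‖φ‖ * ε := by
    rw [hS, Finset.sup'_lt_iff]
    intro i _
    have h1 : φ (v i) = φ (d i) + φ (v i - d i) := by
      rw [← φ.map_add]; congr 1; abel
    have h2 : φ (v i - d i) ≤ ‖φ‖ * ‖v i - d i‖ :=
      (le_abs_self _).trans ((Real.norm_eq_abs (φ (v i - d i))) ▸ φ.le_opNorm _)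
    have h3 : ‖v i - d i‖ < ε := by rw [← dist_eq_norm, dist_comm]; exact hd i
    have h4 : ‖φ‖ * ‖v i - d i‖ < ‖φ‖ * ε := by
      exact mul_lt_mul_of_pos_left h3 hφpos
    calc φ (v i) ≤ φ (d i) + ‖φ‖ * ‖v i - d i‖ := by rw [h1]; linarith
    _ < u + ‖φ‖ * ε := by have := hφd i; linarith
  have hy'val : φ y' = φ y + ε * ‖φ‖ := by
    rw [hy', φ.map_add, φ.map_smul, hφg]; simp
  have := hhalf hy'hull
  rw [Set.mem_setOf_eq, hy'val] at this
  nlinarith [hu2]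

lemma ereal_is_real {a : EReal} (h1 : a ≠ ⊤) (h2 : a ≠ ⊥) : ∃ t : ℝ, a = (t:EReal) := by
  induction a with
  | bot => exact absurd rfl h2
  | coe t => exact ⟨t, rfl⟩
  | top => exact absurd rfl h1

lemma local_upper {n : ℕ} {f : EuclideanSpace ℝ (Fin n) → EReal}
    (hfb : ∀ x, f x ≠ ⊥) (hfconv : ConvexE f)
    {fs : ℕ → EuclideanSpace ℝ (Fin n) → EReal}
    (hfsb : ∀ j x, fs j x ≠ ⊥) (hfsconv : ∀ j, ConvexE (fs j))
    {D : Set (EuclideanSpace ℝ (Fin n))} (hD : Dense D)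
    (hpt : ∀ x ∈ D, Tendsto (fun j => fs j x) atTop (nhds (f x)))
    {x : EuclideanSpace ℝ (Fin n)} (hx : x ∈ interior {y | f y ≠ ⊤}) :
    ∃ r > 0, ∃ M : ℝ, (∀ y ∈ ball x r, f y ≤ (M:EReal)) ∧
      ∀ᶠ j in atTop, ∀ y ∈ ball x r, fs j y ≤ (M:EReal) := by
  rcases Nat.eq_zero_or_pos n with hn | hn
  · subst hn
    have hall : ∀ y : EuclideanSpace ℝ (Fin 0), y = x := fun y => by
      ext i; exact i.elim0
    have hxS : f x ≠ ⊤ := interior_subset hx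
    obtain ⟨c, hc⟩ := ereal_is_real hxS (hfb x)
    obtain ⟨dpt, hdpt⟩ := hD.nonempty
    have hdx : dpt = x := hall dpt
    subst hdx
    have htd := hpt dpt hdpt
    rw [hc] at htd
    have hev : ∀ᶠ j in atTop, fs j dpt < ((c+1:ℝ):EReal) :=
      htd.eventually_lt_const (by exact_mod_cast (by linarith : c < c + 1))
    refine ⟨1, one_pos, c+1, ?_, ?_⟩
    · intro y hy
      rw [hall y, hc]
      exact_mod_cast (by linarith : c ≤ c + 1)
    · filter_upwards [hev] with j hj y hy
      rw [hall y]
      exact hj.le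
  · haveI : Nonempty (Fin n) := ⟨⟨0, hn⟩⟩
    obtain ⟨ρ0, hρ0, hball⟩ := Metric.isOpen_iff.1 isOpen_interior x hx
    set ρ : ℝ := ρ0/2 with hρdef
    have hρ : 0 < ρ := by positivity
    set ε : ℝ := ρ/(2*(n+1)) with hεdef
    have hε : 0 < ε := by positivity
    set v : Fin n × Bool → EuclideanSpace ℝ (Fin n) :=
      fun p => x + ((if p.2 then ρ else -ρ) • EuclideanSpace.single p.1 (1:ℝ)) with hvdef
    have hvx : ∀ p, ‖v p - x‖ = ρ := by
      intro p
      rw [hvdef]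
      simp only [add_sub_cancel_left]
      rw [norm_smul, EuclideanSpace.norm_single]
      have : ‖(1:ℝ)‖ = 1 := by norm_num
      rw [this, mul_one]
      split
      · exact abs_of_pos hρ
      · rw [norm_neg, Real.norm_eq_abs]; exact abs_of_pos hρ
    set δ' : ℝ := min ε (ρ0/4) with hδ'def
    have hδ'pos : 0 < δ' := lt_min hε (by positivity)
    have hchoice : ∀ p : Fin n × Bool, ∃ q, q ∈ D ∧ dist (v p) q < δ' := by
      intro p
      obtain ⟨q, hq1, hq2⟩ := Metric.dense_iff.1 hD (v p) δ' hδ'pos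
      exact ⟨q, hq2, by rw [dist_comm]; exact mem_ball.1 hq1⟩
    choose d hd1 hd2 using hchoice
    have hdball : ∀ p, d p ∈ ball x ρ0 := by
      intro p
      rw [mem_ball_iff_norm]
      calc ‖d p - x‖ ≤ ‖d p - v p‖ + ‖v p - x‖ := by
            have := norm_add_le (d p - v p) (v p - x); simpa using this
      _ < ρ0/4 + ρ := by
          have h1 : ‖d p - v p‖ < ρ0/4 := by
            rw [← dist_eq_norm, dist_comm]
            exact (hd2 p).trans_le (min_le_right _ _)
          have h2 := hvx p
          linarith [h2.le]
      _ ≤ ρ0 := by rw [hρdef]; linarith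
    have hdS : ∀ p, f (d p) ≠ ⊤ := fun p => interior_subset (hball (hdball p))
    have hdval : ∀ p, ∃ t : ℝ, f (d p) = (t:EReal) := fun p =>
      ereal_is_real (hdS p) (hfb (d p))
    choose c hc using hdval
    set M : ℝ := (Finset.univ.sup' Finset.univ_nonempty c) + 1 with hMdef
    have hcM : ∀ p, c p < M := by
      intro p
      have := Finset.le_sup' c (Finset.mem_univ p)
      rw [hMdef]; linarith
    have hper : ball x ε ⊆ convexHull ℝ (Set.range d) := by
      apply hull_perturb hε v d
      · have h2ε : 2*ε = ρ/(n+1) := by rw [hεdef]; field_simp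
        rw [h2ε]
        exact ball_subset_hull_cross hn x hρ
      · intro p
        rw [dist_comm]
        exact (hd2 p).trans_le (min_le_left _ _)
    refine ⟨ε, hε, M, ?_, ?_⟩
    · intro y hy
      have hsub : convexHull ℝ (Set.range d) ⊆ {y | f y ≤ (M:EReal)} := by
        apply convexHull_min
        · rintro _ ⟨p, rfl⟩
          rw [Set.mem_setOf_eq, hc p]
          exact_mod_cast (hcM p).le
        · exact sublevel_convex hfconv M
      exact hsub (hper hy)
    · have hev : ∀ᶠ j in atTop, ∀ p : Fin n × Bool, fs j (d p) < (M:EReal) := by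
        rw [eventually_all]
        intro p
        have htd := hpt (d p) (hd1 p)
        rw [hc p] at htd
        exact htd.eventually_lt_const (by exact_mod_cast hcM p)
      filter_upwards [hev] with j hj y hy
      have hsub : convexHull ℝ (Set.range d) ⊆ {y | fs j y ≤ (M:EReal)} := by
        apply convexHull_min
        · rintro _ ⟨p, rfl⟩
          exact (hj p).le
        · exact sublevel_convex (hfsconv j) M
      exact hsub (hper hy)


lemma local_bounds {n : ℕ} {f : EuclideanSpace ℝ (Fin n) → EReal}
    (hfb : ∀ x, f x ≠ ⊥) (hfconv : ConvexE f)
    {fs : ℕ → EuclideanSpace ℝ (Fin n) → EReal}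
    (hfsb : ∀ j x, fs j x ≠ ⊥) (hfsconv : ∀ j, ConvexE (fs j))
    {D : Set (EuclideanSpace ℝ (Fin n))} (hD : Dense D)
    (hpt : ∀ x ∈ D, Tendsto (fun j => fs j x) atTop (nhds (f x)))
    {x : EuclideanSpace ℝ (Fin n)} (hx : x ∈ interior {y | f y ≠ ⊤}) :
    ∃ r > 0, ∃ m M : ℝ,
      (∀ y ∈ ball x (3*r), ∃ t : ℝ, f y = (t:EReal) ∧ m ≤ t ∧ t ≤ M) ∧
      ∀ᶠ j in atTop, ∀ y ∈ ball x (3*r), ∃ t : ℝ, fs j y = (t:EReal) ∧ m ≤ t ∧ t ≤ M := by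
  obtain ⟨R, hR, M, hfM, hfsM⟩ := local_upper hfb hfconv hfsb hfsconv hD hpt hx
  obtain ⟨d, hdD, hdd⟩ : ∃ d, d ∈ D ∧ dist x d < R/9 := by
    obtain ⟨q, hq1, hq2⟩ := Metric.dense_iff.1 hD x (R/9) (by linarith)
    exact ⟨q, hq2, mem_ball'.1 hq1⟩
  have hdballR : d ∈ ball x R := by
    rw [mem_ball, dist_comm]; exact hdd.trans (by linarith)
  obtain ⟨c, hcval, hcM⟩ := ereal_exists_real (hfb d) (hfM d hdballR)
  set m : ℝ := 2*(c-1) - M with hmdef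
  refine ⟨R/9, by linarith, m, M, ?_, ?_⟩
  · intro y hy
    have hyR : y ∈ ball x R := by
      rw [mem_ball] at hy ⊢; linarith
    obtain ⟨t, ht, htM⟩ := ereal_exists_real (hfb y) (hfM y hyR)
    refine ⟨t, ht, ?_, htM⟩
    -- reflection point
    set z : EuclideanSpace ℝ (Fin n) := (2:ℝ) • d - y with hzdef
    have hzR : z ∈ ball x R := by
      rw [mem_ball_iff_norm]
      have hexp : z - x = (d - x) + (d - y) := by rw [hzdef]; module
      rw [hexp]
      have h1 : ‖d - x‖ < R/9 := by rw [← dist_eq_norm, dist_comm]; exact hdd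
      have h2 : ‖d - y‖ ≤ ‖d - x‖ + ‖x - y‖ := norm_sub_le_norm_sub_add_norm_sub d x y
      have h3 : ‖x - y‖ < 3*(R/9) := by rw [← dist_eq_norm, dist_comm]; exact mem_ball.1 hy
      calc ‖(d - x) + (d - y)‖ ≤ ‖d - x‖ + ‖d - y‖ := norm_add_le _ _
      _ < R := by linarith
    obtain ⟨s, hs, hsM⟩ := ereal_exists_real (hfb z) (hfM z hzR)
    have hmid : (1/2:ℝ) • y + (1/2:ℝ) • z = d := by rw [hzdef]; module
    have hcombo := convexE_combo hfconv (by norm_num : (0:ℝ) ≤ 1/2)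
      (by norm_num : (0:ℝ) ≤ 1/2) (by norm_num) ht.le hs.le
    rw [hmid, hcval] at hcombo
    have : c ≤ 1/2 * t + 1/2 * s := by exact_mod_cast hcombo
    rw [hmdef]; linarith
  · have hev2 : ∀ᶠ j in atTop, ((c-1:ℝ):EReal) < fs j d := by
      have htd := hpt d hdD
      rw [hcval] at htd
      exact htd.eventually_const_lt (by exact_mod_cast (by linarith : c - 1 < c))
    filter_upwards [hfsM, hev2] with j hjM hjd y hy
    have hyR : y ∈ ball x R := by
      rw [mem_ball] at hy ⊢; linarith
    obtain ⟨t, ht, htM⟩ := ereal_exists_real (hfsb j y) (hjM y hyR)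
    refine ⟨t, ht, ?_, htM⟩
    set z : EuclideanSpace ℝ (Fin n) := (2:ℝ) • d - y with hzdef
    have hzR : z ∈ ball x R := by
      rw [mem_ball_iff_norm]
      have hexp : z - x = (d - x) + (d - y) := by rw [hzdef]; module
      rw [hexp]
      have h1 : ‖d - x‖ < R/9 := by rw [← dist_eq_norm, dist_comm]; exact hdd
      have h2 : ‖d - y‖ ≤ ‖d - x‖ + ‖x - y‖ := norm_sub_le_norm_sub_add_norm_sub d x y
      have h3 : ‖x - y‖ < 3*(R/9) := by rw [← dist_eq_norm, dist_comm]; exact mem_ball.1 hy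
      calc ‖(d - x) + (d - y)‖ ≤ ‖d - x‖ + ‖d - y‖ := norm_add_le _ _
      _ < R := by linarith
    obtain ⟨s, hs, hsM⟩ := ereal_exists_real (hfsb j z) (hjM z hzR)
    have hmid : (1/2:ℝ) • y + (1/2:ℝ) • z = d := by rw [hzdef]; module
    have hcombo := convexE_combo (hfsconv j) (by norm_num : (0:ℝ) ≤ 1/2)
      (by norm_num : (0:ℝ) ≤ 1/2) (by norm_num) ht.le hs.le
    rw [hmid] at hcombo
    have hlow : ((c-1:ℝ):EReal) < ((1/2 * t + 1/2 * s : ℝ):EReal) := hjd.trans_le hcombo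
    have : c - 1 < 1/2 * t + 1/2 * s := by exact_mod_cast hlow
    rw [hmdef]; linarith


lemma convex_lip {n : ℕ} {g : EuclideanSpace ℝ (Fin n) → EReal} (hg : ConvexE g)
    {x : EuclideanSpace ℝ (Fin n)} {R m M : ℝ} (hR : 0 < R)
    (hb : ∀ y ∈ ball x R, ∃ t : ℝ, g y = (t:EReal) ∧ m ≤ t ∧ t ≤ M)
    {y y' : EuclideanSpace ℝ (Fin n)} (hy : y ∈ ball x (R/2)) (hy' : y' ∈ ball x (R/2))
    {t t' : ℝ} (ht : g y = (t:EReal)) (ht' : g y' = (t':EReal)) :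
    t' - t ≤ (M - m) * (2/R) * ‖y' - y‖ := by
  have hyR : y ∈ ball x R := by rw [mem_ball] at hy ⊢; linarith [mem_ball.1 hy]
  have hy'R : y' ∈ ball x R := by rw [mem_ball] at hy' ⊢; linarith [mem_ball.1 hy']
  have hmM : m ≤ M := by
    obtain ⟨s, hs1, hs2, hs3⟩ := hb y hyR
    linarith
  rcases eq_or_ne y' y with rfl | hne
  · have h0 : t' = t := by
      rw [ht] at ht'
      exact_mod_cast ht'.symm
    rw [h0]
    simp
  · set u := y' - y with hudef
    have hu : 0 < ‖u‖ := by
      rw [norm_pos_iff]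
      intro h0
      apply hne
      have : y' - y = 0 := h0
      have := sub_eq_zero.1 this
      exact this
    set cc : ℝ := (R/2)/‖u‖ with hccdef
    have hcc : 0 < cc := by positivity
    set y'' := y' + cc • u with hy''def
    have hy''R : y'' ∈ ball x R := by
      rw [mem_ball_iff_norm]
      have hexp : y'' - x = (y' - x) + cc • u := by rw [hy''def]; module
      rw [hexp]
      have h1 : ‖cc • u‖ = R/2 := by
        rw [norm_smul, Real.norm_eq_abs, abs_of_pos hcc, hccdef]
        field_simp
      calc ‖(y' - x) + cc • u‖ ≤ ‖y' - x‖ + ‖cc • u‖ := norm_add_le _ _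
      _ < R/2 + R/2 := by
          rw [h1]
          have := mem_ball_iff_norm.1 hy'
          linarith
      _ = R := by ring
    obtain ⟨t'', ht'', hm'', hM''⟩ := hb y'' hy''R
    set a : ℝ := cc/(1+cc) with hadef
    set b : ℝ := 1/(1+cc) with hbdef
    have hab : a + b = 1 := by rw [hadef, hbdef]; field_simp; ring
    have ha : 0 ≤ a := by positivity
    have hbpos : 0 < b := by positivity
    have hkey : a • y + b • y'' = y' := by
      rw [hy''def, hadef, hbdef, hudef]
      match_scalars <;> field_simp <;> ring
    have hcombo := convexE_combo hg ha hbpos.le hab ht.le ht''.le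
    rw [hkey, ht'] at hcombo
    have hreal : t' ≤ a * t + b * t'' := by exact_mod_cast hcombo
    have hb1 : b ≤ ‖u‖/(R/2) := by
      rw [hbdef, hccdef]
      rw [div_le_div_iff₀ (by positivity) (by positivity)]
      have : (R/2) ≤ ‖u‖ * (1 + R/2/‖u‖) := by
        rw [mul_add, mul_one, mul_div_assoc']
        have : ‖u‖ * (R/2) / ‖u‖ = R/2 := by field_simp
        rw [this]
        linarith
      linarith
    have hstep : t' - t ≤ b * (t'' - t) := by
      have : a = 1 - b := by linarith
      rw [this] at hreal
      nlinarith
    have hfin : b * (t'' - t) ≤ (M - m) * (2/R) * ‖u‖ := by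
      have h1 : t'' - t ≤ M - m := by
        obtain ⟨s, hs1, hs2, hs3⟩ := hb y hyR
        have : s = t := by rw [hs1] at ht; exact_mod_cast ht
        subst this
        linarith
      have h2 : b * (t'' - t) ≤ b * (M - m) := by
        apply mul_le_mul_of_nonneg_left h1 hbpos.le
      have h3 : b * (M - m) ≤ (‖u‖/(R/2)) * (M - m) := by
        apply mul_le_mul_of_nonneg_right hb1 (by linarith)
      have h4 : (‖u‖/(R/2)) * (M - m) = (M - m) * (2/R) * ‖u‖ := by
        field_simp
      linarith
    linarith


lemma loc_unif_interior {n : ℕ} {f : EuclideanSpace ℝ (Fin n) → EReal}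
    (hfb : ∀ x, f x ≠ ⊥) (hfconv : ConvexE f)
    {fs : ℕ → EuclideanSpace ℝ (Fin n) → EReal}
    (hfsb : ∀ j x, fs j x ≠ ⊥) (hfsconv : ∀ j, ConvexE (fs j))
    {D : Set (EuclideanSpace ℝ (Fin n))} (hD : Dense D)
    (hpt : ∀ x ∈ D, Tendsto (fun j => fs j x) atTop (nhds (f x)))
    {x : EuclideanSpace ℝ (Fin n)} (hx : x ∈ interior {y | f y ≠ ⊤}) :
    ∃ r > 0, ∀ ε > 0, ∀ᶠ j in atTop, ∀ y ∈ ball x r,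
      |embE (fs j y) - embE (f y)| < ε := by
  obtain ⟨r0, hr0, m, M, hfB, hfsB⟩ := local_bounds hfb hfconv hfsb hfsconv hD hpt hx
  set R : ℝ := 3*r0 with hRdef
  have hR : 0 < R := by positivity
  have hmM : m ≤ M := by
    obtain ⟨t, -, h2, h3⟩ := hfB x (mem_ball_self hR)
    linarith
  set L : ℝ := (M - m) * (2/R) with hLdef
  have hL : 0 ≤ L := by
    apply mul_nonneg (by linarith) (by positivity)
  refine ⟨R/4, by positivity, ?_⟩
  intro ε hε
  set δ : ℝ := min (ε/(3*(L+1))) (R/8) with hδdef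
  have hδ : 0 < δ := lt_min (by positivity) (by positivity)
  obtain ⟨T, hT1, hT2⟩ := dense_net hD (isCompact_closedBall x (R/4)) hδ
  have hTball : ∀ d ∈ T, d ∈ ball x (R/2) := by
    intro d hd
    obtain ⟨-, q, hq, hqd⟩ := hT1 d hd
    rw [mem_ball]
    calc dist d x ≤ dist d q + dist q x := dist_triangle _ _ _
    _ < δ + R/4 := by
        rw [dist_comm] at hqd
        exact add_lt_add_of_lt_of_le hqd (mem_closedBall.1 hq)
    _ ≤ R/8 + R/4 := by have := min_le_right (ε/(3*(L+1))) (R/8); linarith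
    _ < R/2 := by linarith
  have hTR : ∀ d ∈ T, d ∈ ball x R := by
    intro d hd
    have := hTball d hd
    rw [mem_ball] at this ⊢
    linarith
  have hTval : ∀ d ∈ T, ∃ c : ℝ, f d = (c:EReal) ∧ m ≤ c ∧ c ≤ M := fun d hd =>
    hfB d (hTR d hd)
  choose! c hc1 hc2 hc3 using hTval
  have hev1 : ∀ᶠ j in atTop, ∀ d ∈ T, ∃ s : ℝ, fs j d = (s:EReal) ∧ |s - c d| < ε/3 := by
    rw [eventually_all_finset]
    intro d hd
    have htd := hpt d (hT1 d hd).1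
    rw [hc1 d hd] at htd
    exact ereal_tendsto_real htd (by positivity)
  filter_upwards [hev1, hfsB] with j hj hjB y hy
  have hyR : y ∈ ball x R := by rw [mem_ball] at hy ⊢; linarith
  have hyhalf : y ∈ ball x (R/2) := by rw [mem_ball] at hy ⊢; linarith
  obtain ⟨t, ht, htm, htM⟩ := hfB y hyR
  obtain ⟨tj, htj, htjm, htjM⟩ := hjB y hyR
  obtain ⟨d, hdT, hyd⟩ := hT2 y (mem_closedBall.2 (mem_ball.1 hy).le)
  obtain ⟨s, hs, hsc⟩ := hj d hdT
  have hdist : ‖d - y‖ < δ := by rw [← dist_eq_norm, dist_comm]; exact hyd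
  have hdist' : ‖y - d‖ < δ := by rw [← dist_eq_norm]; exact hyd
  -- f is Lipschitz-controlled between y and d
  have hf1 : c d - t ≤ L * δ := by
    have := convex_lip hfconv hR hfB hyhalf (hTball d hdT) ht (hc1 d hdT)
    calc c d - t ≤ (M - m) * (2/R) * ‖d - y‖ := this
    _ ≤ L * δ := by
        rw [hLdef]
        exact mul_le_mul_of_nonneg_left hdist.le hL
  have hf2 : t - c d ≤ L * δ := by
    have := convex_lip hfconv hR hfB (hTball d hdT) hyhalf (hc1 d hdT) ht
    calc t - c d ≤ (M - m) * (2/R) * ‖y - d‖ := this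
    _ ≤ L * δ := by
        rw [hLdef]
        exact mul_le_mul_of_nonneg_left hdist'.le hL
  have hg1 : s - tj ≤ L * δ := by
    have := convex_lip (hfsconv j) hR hjB hyhalf (hTball d hdT) htj hs
    calc s - tj ≤ (M - m) * (2/R) * ‖d - y‖ := this
    _ ≤ L * δ := by
        rw [hLdef]
        exact mul_le_mul_of_nonneg_left hdist.le hL
  have hg2 : tj - s ≤ L * δ := by
    have := convex_lip (hfsconv j) hR hjB (hTball d hdT) hyhalf hs htj
    calc tj - s ≤ (M - m) * (2/R) * ‖y - d‖ := this
    _ ≤ L * δ := by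
        rw [hLdef]
        exact mul_le_mul_of_nonneg_left hdist'.le hL
  have hLδ : L * δ ≤ ε/3 := by
    have h1 : δ ≤ ε/(3*(L+1)) := min_le_left _ _
    have h2 : L * δ ≤ L * (ε/(3*(L+1))) := mul_le_mul_of_nonneg_left h1 hL
    have h3 : L * (ε/(3*(L+1))) ≤ ε/3 := by
      rw [mul_comm, div_mul_eq_mul_div, div_le_div_iff₀ (by positivity) (by norm_num : (0:ℝ) < 3)]
      nlinarith
    linarith
  have habs : |tj - t| < ε := by
    rw [abs_sub_lt_iff]
    rw [abs_sub_lt_iff] at hsc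
    constructor <;> nlinarith
  rw [ht, htj, embE_coe, embE_coe]
  calc |Real.tanh tj - Real.tanh t| ≤ |tj - t| := tanh_dist tj t
  _ < ε := habs


lemma loc_unif_exterior {n : ℕ} {f : EuclideanSpace ℝ (Fin n) → EReal}
    {fs : ℕ → EuclideanSpace ℝ (Fin n) → EReal}
    (hfsb : ∀ j x, fs j x ≠ ⊥) (hfsconv : ∀ j, ConvexE (fs j))
    {D : Set (EuclideanSpace ℝ (Fin n))} (hD : Dense D)
    (hpt : ∀ x ∈ D, Tendsto (fun j => fs j x) atTop (nhds (f x)))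
    {z : EuclideanSpace ℝ (Fin n)} {r0 K : ℝ} (hr0 : 0 < r0)
    (hzK : ∀ᶠ j in atTop, ∀ y ∈ ball z r0, fs j y ≤ (K:EReal))
    {x : EuclideanSpace ℝ (Fin n)} (hx : x ∈ interior {y | f y = ⊤}) :
    ∃ r > 0, ∀ ε > 0, ∀ᶠ j in atTop, ∀ y ∈ ball x r,
      |embE (fs j y) - embE (f y)| < ε := by
  obtain ⟨rE, hrE, hballE⟩ := Metric.isOpen_iff.1 isOpen_interior x hx
  -- pick the contraction factor lam
  set U : Set ℝ := {t : ℝ | z + t • (x - z) ∈ interior {y | f y = ⊤}} with hUdef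
  have hUopen : IsOpen U := by
    have hcont : Continuous (fun t : ℝ => z + t • (x - z)) :=
      continuous_const.add (continuous_id.smul continuous_const)
    exact hcont.isOpen_preimage _ isOpen_interior
  have h1U : (1:ℝ) ∈ U := by
    rw [hUdef]
    simp only [Set.mem_setOf_eq, one_smul]
    have : z + (x - z) = x := by abel
    rw [this]
    exact hx
  obtain ⟨η, hη, hballU⟩ := Metric.isOpen_iff.1 hUopen 1 h1U
  set lam : ℝ := max (1 - η/2) (1/2) with hlamdef
  have hlam1 : lam < 1 := by
    apply max_lt (by linarith) (by norm_num)
  have hlampos : 0 < lam := lt_of_lt_of_le (by norm_num) (le_max_right _ _)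
  have hlamU : lam ∈ U := by
    apply hballU
    rw [mem_ball, Real.dist_eq, abs_of_nonpos (by linarith), neg_sub]
    have := le_max_left (1 - η/2) (1/2)
    linarith
  set p := z + lam • (x - z) with hpdef
  have hpmem : p ∈ interior {y | f y = ⊤} := hlamU
  obtain ⟨ρ, hρ, hballp⟩ := Metric.isOpen_iff.1 isOpen_interior p hpmem
  set r : ℝ := min rE (ρ/(3*lam)) with hrdef
  have hr : 0 < r := lt_min hrE (by positivity)
  set δ : ℝ := min (ρ/3) ((1-lam)*r0/2) with hδdef
  have hδ : 0 < δ := lt_min (by positivity) (by nlinarith)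
  obtain ⟨T, hT1, hT2⟩ := dense_net hD (isCompact_closedBall p (lam*r)) hδ
  have hTtop : ∀ d ∈ T, f d = ⊤ := by
    intro d hd
    obtain ⟨-, q, hq, hqd⟩ := hT1 d hd
    have hdp : dist p d < ρ := by
      calc dist p d ≤ dist p q + dist q d := dist_triangle _ _ _
      _ < lam*r + δ := by
          rw [dist_comm p q]
          exact add_lt_add_of_le_of_lt (mem_closedBall.1 hq) hqd
      _ ≤ ρ/3 + ρ/3 := by
          have h1 : lam * r ≤ lam * (ρ/(3*lam)) :=
            mul_le_mul_of_nonneg_left (min_le_right _ _) hlampos.le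
          have h2 : lam * (ρ/(3*lam)) = ρ/3 := by field_simp
          have h3 : δ ≤ ρ/3 := min_le_left _ _
          linarith
      _ < ρ := by linarith
    have h5 : d ∈ {y : EuclideanSpace ℝ (Fin n) | f y = ⊤} :=
      interior_subset (hballp (mem_ball'.2 hdp))
    exact h5
  refine ⟨r, hr, ?_⟩
  intro ε hε
  obtain ⟨A, hA⟩ := exists_tanh_near ε hε
  set M' : ℝ := lam*A + (1-lam)*K + 1 with hM'def
  have hev : ∀ᶠ j in atTop, ∀ d ∈ T, ((M':ℝ):EReal) < fs j d := by
    rw [eventually_all_finset]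
    intro d hd
    have htd := hpt d (hT1 d hd).1
    rw [hTtop d hd] at htd
    exact htd.eventually_const_lt (by simp)
  filter_upwards [hev, hzK] with j hj hjK y hy
  have hytop : f y = ⊤ := by
    have h1 : y ∈ ball x rE := by
      rw [mem_ball] at hy ⊢
      exact hy.trans_le (min_le_left _ _)
    have h5 : y ∈ {y : EuclideanSpace ℝ (Fin n) | f y = ⊤} := interior_subset (hballE h1)
    exact h5
  rw [hytop, embE_top]
  set q := z + lam • (y - z) with hqdef
  have hqp : dist q p = lam * ‖y - x‖ := by
    rw [dist_eq_norm]
    have hexp : q - p = lam • (y - x) := by rw [hqdef, hpdef]; module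
    rw [hexp, norm_smul, Real.norm_eq_abs, abs_of_pos hlampos]
  have hqK' : q ∈ closedBall p (lam*r) := by
    rw [mem_closedBall, hqp]
    have : ‖y - x‖ < r := by rw [← dist_eq_norm, ← mem_ball]; exact hy
    nlinarith
  obtain ⟨d, hdT, hqd⟩ := hT2 q hqK'
  set z' := z + ((1-lam)⁻¹) • (d - q) with hz'def
  have hz'ball : z' ∈ ball z r0 := by
    rw [mem_ball_iff_norm]
    have hexp : z' - z = ((1-lam)⁻¹) • (d - q) := by rw [hz'def]; abel
    rw [hexp, norm_smul, Real.norm_eq_abs, abs_of_pos (inv_pos.2 (by linarith : (0:ℝ) < 1 - lam))]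
    have h1 : ‖d - q‖ < δ := by rw [← dist_eq_norm, dist_comm]; exact hqd
    have h2 : δ ≤ (1-lam)*r0/2 := min_le_right _ _
    have h3 : (1-lam)⁻¹ * ‖d - q‖ < (1-lam)⁻¹ * δ :=
      mul_lt_mul_of_pos_left h1 (inv_pos.2 (by linarith : (0:ℝ) < 1 - lam))
    have h4 : (1-lam)⁻¹ * δ ≤ r0/2 := by
      rw [inv_mul_le_iff₀ (by linarith : (0:ℝ) < 1 - lam)]
      calc δ ≤ (1-lam)*r0/2 := h2
      _ = (1-lam) * (r0/2) := by ring
    linarith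
  obtain ⟨w, hw, hwK⟩ := ereal_exists_real (hfsb j z') (hjK z' hz'ball)
  have hkey : (1-lam) • z' + lam • y = d := by
    have hne : (1:ℝ) - lam ≠ 0 := by linarith
    rw [hz'def, hqdef]
    match_scalars <;> field_simp [hne] <;> ring
  by_cases htop : fs j y = ⊤
  · rw [htop, embE_top]
    simpa using hε
  · obtain ⟨t, ht⟩ := ereal_is_real htop (hfsb j y)
    have hcombo := convexE_combo (hfsconv j) (by linarith : (0:ℝ) ≤ 1 - lam)
      hlampos.le (by ring) hw.le ht.le
    rw [hkey] at hcombo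
    have hlt : ((M':ℝ):EReal) < (((1-lam)*w + lam*t : ℝ):EReal) :=
      (hj d hdT).trans_le hcombo
    have hreal : M' < (1-lam)*w + lam*t := by exact_mod_cast hlt
    have htA : A ≤ t := by
      have h1 : (1-lam)*w ≤ (1-lam)*K := by
        apply mul_le_mul_of_nonneg_left hwK (by linarith)
      have h2 : lam*A + 1 ≤ lam*t := by
        rw [hM'def] at hreal
        linarith
      have h3 : lam*A < lam*t := by linarith
      exact le_of_lt ((mul_lt_mul_iff_right₀ hlampos).1 h3)
    rw [ht, embE_coe]
    exact hA t htA


end Helpers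

/-- If a sequence of proper lsc convex functions converges pointwise on a dense subset to a
proper lsc convex function `f` whose domain has nonempty interior, then it converges
uniformly to `f` on every compact set containing no boundary point of `dom f`. -/
theorem uniform_convergence_on_compacts {n : ℕ}
    (f : EuclideanSpace ℝ (Fin n) → EReal)
    (hfp : ProperE f) (hflsc : LowerSemicontinuous f) (hfconv : ConvexE f)
    (hdom : (interior {x | f x ≠ ⊤}).Nonempty)
    (fs : ℕ → EuclideanSpace ℝ (Fin n) → EReal)
    (hfs : ∀ j, ProperE (fs j) ∧ LowerSemicontinuous (fs j) ∧ ConvexE (fs j))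
    (D : Set (EuclideanSpace ℝ (Fin n))) (hD : Dense D)
    (hpt : ∀ x ∈ D, Tendsto (fun j => fs j x) atTop (nhds (f x))) :
    ∀ C : Set (EuclideanSpace ℝ (Fin n)), IsCompact C →
      C ∩ frontier {x | f x ≠ ⊤} = ∅ →
      TendstoUniformlyOn (fun j x => embE (fs j x)) (fun x => embE (f x)) atTop C := by
  intro C hC hCfr
  have hfb : ∀ x, f x ≠ ⊥ := hfp.2
  have hfsb : ∀ j x, fs j x ≠ ⊥ := fun j => (hfs j).1.2
  have hfsconv : ∀ j, ConvexE (fs j) := fun j => (hfs j).2.2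
  obtain ⟨z, hz⟩ := hdom
  obtain ⟨r0, hr0, K, -, hzK⟩ := local_upper hfb hfconv hfsb hfsconv hD hpt hz
  have hcompl : ({x : EuclideanSpace ℝ (Fin n) | f x ≠ ⊤})ᶜ = {y | f y = ⊤} := by
    ext y; simp
  have hloc : ∀ x ∈ C, ∃ r > 0, ∀ ε > 0, ∀ᶠ j in atTop, ∀ y ∈ ball x r,
      |embE (fs j y) - embE (f y)| < ε := by
    intro x hxC
    have hxnot : x ∉ frontier {x | f x ≠ ⊤} := by
      intro hmem
      have hmem2 : x ∈ C ∩ frontier {x | f x ≠ ⊤} := ⟨hxC, hmem⟩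
      rw [hCfr] at hmem2
      exact hmem2
    by_cases hcl : x ∈ closure {x | f x ≠ ⊤}
    · have hint : x ∈ interior {x | f x ≠ ⊤} := by
        by_contra hni
        exact hxnot ⟨hcl, hni⟩
      exact loc_unif_interior hfb hfconv hfsb hfsconv hD hpt hint
    · have hint : x ∈ interior {y | f y = ⊤} := by
        rw [← hcompl, interior_compl]
        exact hcl
      exact loc_unif_exterior hfsb hfsconv hD hpt hr0 hzK hint
  choose! r hrpos hP using hloc
  obtain ⟨t, ht⟩ := hC.elim_finite_subcover
    (fun c : ↥C => ball (c : EuclideanSpace ℝ (Fin n)) (r c))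
    (fun c => isOpen_ball)
    (fun y hy => Set.mem_iUnion.2 ⟨⟨y, hy⟩, mem_ball_self (hrpos y hy)⟩)
  rw [Metric.tendstoUniformlyOn_iff]
  intro ε hε
  have hev : ∀ᶠ j in atTop, ∀ c ∈ t,
      ∀ y ∈ ball (c : EuclideanSpace ℝ (Fin n)) (r c), |embE (fs j y) - embE (f y)| < ε := by
    rw [eventually_all_finset]
    intro c hc
    exact hP c c.2 ε hε
  filter_upwards [hev] with j hj y hyC
  have := ht hyC
  rw [Set.mem_iUnion] at this
  obtain ⟨c, hc⟩ := this
  simp only [Set.mem_iUnion] at hc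
  obtain ⟨hct, hyball⟩ := hc
  have hfin := hj c hct y hyball
  rw [Real.dist_eq, abs_sub_comm]
  exact hfin
end

section
/- Let V be a Hausdorff topological real vector space and μ : K^n → V a continuous valuation on convex bodies in ℝⁿ such that for each K the map t ↦ μ(tK), t ≥ 0, is a polynomial of degree at most n + d with values in V. Then there exist unique functionals μ_k : K^n → V, k = 0, …, n + d, each a continuous valuation homogeneous of degree k (i.e., μ_k(tK) = t^k μ_k(K) for t > 0), such that μ = Σ_{k=0}^{n+d} μ_k. -/
open scoped Pointwise

lemma smul_body_lipschitz {n : ℕ} (c : ℝ) :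
    LipschitzWith ‖c‖₊ (fun K : ConvexBody (EuclideanSpace ℝ (Fin n)) => c • K) := by
  apply LipschitzWith.of_dist_le_mul
  intro K L
  have h1 : dist (c • K) (c • L)
      = Metric.hausdorffDist (c • (K : Set (EuclideanSpace ℝ (Fin n)))) (c • (L : Set _)) := by
    rw [← ConvexBody.hausdorffDist_coe, ConvexBody.coe_smul, ConvexBody.coe_smul]
  rw [h1, ← ConvexBody.hausdorffDist_coe]
  have key : ∀ M N : ConvexBody (EuclideanSpace ℝ (Fin n)),
      ∀ x ∈ c • (M : Set (EuclideanSpace ℝ (Fin n))),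
      ∃ y ∈ c • (N : Set (EuclideanSpace ℝ (Fin n))), dist x y ≤
        ‖c‖ * Metric.hausdorffDist (M : Set (EuclideanSpace ℝ (Fin n)))
          (N : Set (EuclideanSpace ℝ (Fin n))) := by
    intro M N x hx
    obtain ⟨a, ha, rfl⟩ := Set.mem_smul_set.mp hx
    obtain ⟨b, hb, hab⟩ := N.isCompact.exists_infDist_eq_dist N.nonempty a
    refine ⟨c • b, Set.smul_mem_smul_set hb, ?_⟩
    have : dist (c • a) (c • b) = ‖c‖ * dist a b := by
      simp [dist_eq_norm, ← smul_sub, norm_smul]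
    rw [this, ← hab]
    exact mul_le_mul_of_nonneg_left
      (Metric.infDist_le_hausdorffDist_of_mem ha ConvexBody.hausdorffEdist_ne_top)
      (norm_nonneg c)
  exact Metric.hausdorffDist_le_of_mem_dist
    (mul_nonneg (norm_nonneg c) Metric.hausdorffDist_nonneg)
    (key K L) (fun x hx => by
      obtain ⟨y, hy, h⟩ := key L K x hx
      exact ⟨y, hy, by rwa [Metric.hausdorffDist_comm] at h⟩)

lemma coeff_eq {N : ℕ} {V : Type*} [AddCommGroup V] [Module ℝ V]
    (A : Matrix (Fin N) (Fin N) ℝ) (hA : IsUnit A.det) (f c : Fin N → V)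
    (h : ∀ j, f j = ∑ k, A j k • c k) (k : Fin N) : c k = ∑ j, A⁻¹ k j • f j := by
  have : ∑ j, A⁻¹ k j • f j = ∑ m, ((A⁻¹ * A) k m) • c m := by
    simp only [h, Finset.smul_sum, Matrix.mul_apply, Finset.sum_smul, smul_smul]
    rw [Finset.sum_comm]
  rw [this, Matrix.nonsing_inv_mul _ hA]
  simp [Matrix.one_apply, ite_smul]

lemma vdm_unit (N : ℕ) : IsUnit (Matrix.vandermonde (fun j : Fin N => (j : ℝ) + 1)).det := by
  rw [Matrix.det_vandermonde, isUnit_iff_ne_zero]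
  apply Finset.prod_ne_zero_iff.mpr
  intro i _
  apply Finset.prod_ne_zero_iff.mpr
  intro j hj
  have : (i : ℝ) < (j : ℝ) := by
    exact_mod_cast Fin.lt_iff_val_lt_val.mp (Finset.mem_Ioi.mp hj)
  intro hcon
  nlinarith

/-- A valuation on convex bodies: additive on unions and intersections, whenever the union
is again a convex body. -/
def IsValu {n : ℕ} {V : Type*} [AddCommMonoid V]
    (μ : ConvexBody (EuclideanSpace ℝ (Fin n)) → V) : Prop :=
  ∀ K L M N : ConvexBody (EuclideanSpace ℝ (Fin n)),
    (M : Set (EuclideanSpace ℝ (Fin n))) = ↑K ∪ ↑L →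
    (N : Set (EuclideanSpace ℝ (Fin n))) = ↑K ∩ ↑L →
    μ M + μ N = μ K + μ L

/-- Homogeneous decomposition of polynomial valuations on convex bodies: if `t ↦ μ(tK)` is
a polynomial of degree at most `n + d`, then `μ` decomposes uniquely into homogeneous
continuous valuations of degrees `0, …, n + d`. -/
theorem homogeneous_decomposition_bodies (n d : ℕ)
    (V : Type*) [AddCommGroup V] [Module ℝ V] [TopologicalSpace V]
    [IsTopologicalAddGroup V] [ContinuousSMul ℝ V] [T2Space V]
    (μ : ConvexBody (EuclideanSpace ℝ (Fin n)) → V)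
    (hcont : Continuous μ) (hval : IsValu μ)
    (hpoly : ∀ K : ConvexBody (EuclideanSpace ℝ (Fin n)),
      ∃ c : Fin (n + d + 1) → V, ∀ t : ℝ, 0 ≤ t →
        ∀ L : ConvexBody (EuclideanSpace ℝ (Fin n)),
          (L : Set (EuclideanSpace ℝ (Fin n))) = t • (K : Set (EuclideanSpace ℝ (Fin n))) →
          μ L = ∑ k : Fin (n + d + 1), t ^ (k : ℕ) • c k) :
    ∃! μs : Fin (n + d + 1) → (ConvexBody (EuclideanSpace ℝ (Fin n)) → V),
      (∀ k, Continuous (μs k) ∧ IsValu (μs k) ∧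
        ∀ t : ℝ, 0 < t → ∀ K : ConvexBody (EuclideanSpace ℝ (Fin n)),
          μs k (t • K) = t ^ (k : ℕ) • μs k K) ∧
      ∀ K, μ K = ∑ k, μs k K := by
  set sc : Fin (n + d + 1) → ℝ := fun j => (j : ℝ) + 1 with hsc_def
  have hsc : ∀ j, 0 < sc j := by
    intro j
    have : (0:ℝ) ≤ (j : ℝ) := Nat.cast_nonneg _
    simp only [hsc_def]; linarith
  set W : Matrix (Fin (n + d + 1)) (Fin (n + d + 1)) ℝ := Matrix.vandermonde sc with hW_def
  have hW : IsUnit W.det := vdm_unit (n + d + 1)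
  set ν : Fin (n + d + 1) → (ConvexBody (EuclideanSpace ℝ (Fin n)) → V) :=
    fun k K => ∑ j, W⁻¹ k j • μ (sc j • K) with hν_def
  -- Key identity
  have hKey : ∀ K : ConvexBody (EuclideanSpace ℝ (Fin n)), ∀ t : ℝ, 0 ≤ t →
      μ (t • K) = ∑ k : Fin (n + d + 1), t ^ (k : ℕ) • ν k K := by
    intro K t ht
    obtain ⟨c, hc⟩ := hpoly K
    have hrow : ∀ j, μ (sc j • K) = ∑ k : Fin (n + d + 1), W j k • c k := by
      intro j
      rw [hc (sc j) (hsc j).le (sc j • K) (ConvexBody.coe_smul _ _)]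
      simp [hW_def, Matrix.vandermonde_apply]
    have hν : ∀ k, ν k K = c k := fun k =>
      (coeff_eq W hW (fun j => μ (sc j • K)) c hrow k).symm
    rw [hc t ht (t • K) (ConvexBody.coe_smul _ _)]
    exact Finset.sum_congr rfl fun k _ => by rw [hν k]
  have hhom : ∀ k, ∀ t : ℝ, 0 < t → ∀ K : ConvexBody (EuclideanSpace ℝ (Fin n)),
      ν k (t • K) = t ^ (k : ℕ) • ν k K := by
    intro k t ht K
    have hrow : ∀ j, μ (sc j • t • K) = ∑ m : Fin (n + d + 1), W j m • (t ^ (m : ℕ) • ν m K) := by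
      intro j
      rw [smul_smul, hKey K (sc j * t) (by positivity)]
      refine Finset.sum_congr rfl fun m _ => ?_
      rw [smul_smul, hW_def, Matrix.vandermonde_apply, mul_pow]
    exact (coeff_eq W hW (fun j => μ (sc j • t • K))
      (fun m => t ^ (m : ℕ) • ν m K) hrow k).symm
  refine ⟨ν, ⟨fun k => ⟨?_, ?_, hhom k⟩, ?_⟩, ?_⟩
  · -- continuity
    exact continuous_finset_sum _ fun j _ =>
      (hcont.comp (smul_body_lipschitz (sc j)).continuous).const_smul _
  · -- valuation
    intro K L M Nb hM hN
    have step : ∀ j : Fin (n + d + 1),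
        μ (sc j • M) + μ (sc j • Nb) = μ (sc j • K) + μ (sc j • L) := by
      intro j
      apply hval (sc j • K) (sc j • L) (sc j • M) (sc j • Nb)
      · rw [ConvexBody.coe_smul, hM, Set.smul_set_union, ConvexBody.coe_smul,
          ConvexBody.coe_smul]
      · rw [ConvexBody.coe_smul, hN, Set.smul_set_inter₀ (hsc j).ne', ConvexBody.coe_smul,
          ConvexBody.coe_smul]
    show (∑ j, W⁻¹ _ j • μ (sc j • M)) + ∑ j, W⁻¹ _ j • μ (sc j • Nb)
      = (∑ j, W⁻¹ _ j • μ (sc j • K)) + ∑ j, W⁻¹ _ j • μ (sc j • L)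
    rw [← Finset.sum_add_distrib, ← Finset.sum_add_distrib]
    refine Finset.sum_congr rfl fun j _ => ?_
    rw [← smul_add, ← smul_add, step j]
  · -- sum
    intro K
    have := hKey K 1 zero_le_one
    rw [one_smul] at this
    simpa using this
  · -- uniqueness
    intro μs' ⟨h1, h2⟩
    funext k
    funext K
    have hrow : ∀ j, μ (sc j • K) = ∑ m : Fin (n + d + 1), W j m • μs' m K := by
      intro j
      rw [h2 (sc j • K)]
      refine Finset.sum_congr rfl fun m _ => ?_
      rw [(h1 m).2.2 (sc j) (hsc j) K, hW_def, Matrix.vandermonde_apply]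
    have h3 : μs' k K = ∑ j, W⁻¹ k j • μ (sc j • K) :=
      coeff_eq W hW (fun j => μ (sc j • K)) (fun m => μs' m K) hrow k
    exact h3
end
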